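/- Let q > 23 be an odd prime power and let (a,b) be a valid pair in F_q^2 with a ≠ b. If (α,β,γ) is an autotopism of Q_{a,b} such that each of α, β, γ is an affine permutation of F_q (i.e., of the form x ↦ ψ(x)+c for some additive bijection ψ of F_q and some c ∈ F_q), then α = β = γ. -/
import Mathlib


open scoped Classical
open Finset

noncomputable section

variable {F : Type*} [Field F] [Fintype F]

/-- `x ∈ R_q`: `x` is a nonzero square in `F`. -/
def inR (x : F) : Prop := x ≠ 0 ∧ IsSquare x

/-- `x ∈ N_q`: `x` is a nonzero non-square in `F`. -/
def inN (x : F) : Prop := x ≠ 0 ∧ ¬ IsSquare x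

/-- `(a, b)` is a valid pair: `ab ∈ R_q` and `(a-1)(b-1) ∈ R_q`. -/
def ValidPair (a b : F) : Prop := inR (a * b) ∧ inR ((a - 1) * (b - 1))

/-- The operation of the quadratic quasigroup `Q_{a,b}`:
`x*y = x + a(y-x)` if `y - x ∈ R_q`, `x*y = x + b(y-x)` if `y - x ∈ N_q`, and `x*x = x`. -/
def qmul (a b x y : F) : F :=
  if inR (y - x) then x + a * (y - x) else x + b * (y - x)

/-- `(α, β, γ)` is an autotopism of the quadratic quasigroup `Q_{a,b}`. -/
def IsAutotopism (a b : F) (α β γ : Equiv.Perm F) : Prop :=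
  ∀ x y : F, qmul a b (α x) (β y) = γ (qmul a b x y)

/-- `Atp_i(Q_{a,b})`: the projection of the autotopism group of `Q_{a,b}` onto its
`i`-th coordinate (for `i : Fin 3`). -/
def AtpProj (a b : F) (i : Fin 3) : Set (Equiv.Perm F) :=
  {δ | ∃ α β γ : Equiv.Perm F, IsAutotopism a b α β γ ∧ δ = ![α, β, γ] i}

/-- A permutation of `F_q` is affine (an element of `AGL_d(p)`) if it has the form
`x ↦ ψ(x) + c` for an additive bijection `ψ` and a constant `c`. -/
def IsAffinePerm (f : Equiv.Perm F) : Prop :=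
  ∃ (ψ : F ≃+ F) (c : F), ∀ x : F, f x = ψ x + c

/-- A set of permutations of `F_q` is 2-transitive. -/
def TwoTransitive (G : Set (Equiv.Perm F)) : Prop :=
  ∀ x₁ y₁ x₂ y₂ : F, x₁ ≠ y₁ → x₂ ≠ y₂ → ∃ g ∈ G, g x₁ = x₂ ∧ g y₁ = y₂


/-! ### Auxiliary machinery for the proof -/

set_option linter.unusedSectionVars false

private def qf (a b t : F) : F := if inR t then a * t else b * t

private lemma qf_zero (a b : F) : qf a b 0 = 0 := by
  simp [qf, inR]

private lemma qf_inR {t : F} (a b : F) (h : inR t) : qf a b t = a * t := if_pos h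

private lemma qf_inN {t : F} (a b : F) (h : inN t) : qf a b t = b * t :=
  if_neg fun hr => h.2 hr.2

private lemma chi_zero : quadraticChar F 0 = 0 := quadraticChar_eq_zero_iff.mpr rfl

private lemma ne_zero_of_chi {x : F} {ε : ℤ} (hε : ε ≠ 0) (h : quadraticChar F x = ε) :
    x ≠ 0 := fun h0 => hε (by rw [← h, h0, chi_zero])

private lemma inR_of_chi {x : F} (h : quadraticChar F x = 1) : inR x := by
  have hx : x ≠ 0 := ne_zero_of_chi one_ne_zero h
  exact ⟨hx, (quadraticChar_one_iff_isSquare hx).mp h⟩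

private lemma inN_of_chi {x : F} (h : quadraticChar F x = -1) : inN x := by
  have hx : x ≠ 0 := ne_zero_of_chi (by norm_num) h
  exact ⟨hx, quadraticChar_neg_one_iff_not_isSquare.mp h⟩

private lemma chi_trichotomy (u : F) :
    quadraticChar F u = 0 ∨ quadraticChar F u = 1 ∨ quadraticChar F u = -1 := by
  by_cases hu : u = 0
  · exact Or.inl (by rw [hu]; exact chi_zero)
  · exact Or.inr (quadraticChar_dichotomy hu)

private lemma sum_chi_shift (hchar : ringChar F ≠ 2) (c : F) :
    ∑ x : F, quadraticChar F (c - x) = 0 := by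
  rw [← quadraticChar_sum_zero hchar]
  exact Fintype.sum_equiv (Equiv.subLeft c) _ _ fun x => rfl

private lemma sum_chi_jacobi (hchar : ringChar F ≠ 2) {c : F} (hc : c ≠ 0) :
    ∑ x : F, quadraticChar F x * quadraticChar F (c - x) = - quadraticChar F (-1) := by
  have h1 : ∑ y : F, quadraticChar F y * quadraticChar F (1 - y)
      = - quadraticChar F (-1) := by
    have := jacobiSum_nontrivial_inv (quadraticChar_ne_one hchar)
    rwa [(quadraticChar_isQuadratic F).inv, jacobiSum] at this
  rw [← h1]
  refine (Fintype.sum_equiv (Equiv.mulLeft₀ c hc)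
    (fun y => quadraticChar F y * quadraticChar F (1 - y))
    (fun x => quadraticChar F x * quadraticChar F (c - x)) fun y => ?_).symm
  show quadraticChar F y * quadraticChar F (1 - y)
      = quadraticChar F (c * y) * quadraticChar F (c - c * y)
  rw [show c - c * y = c * (1 - y) from by ring, map_mul, map_mul]
  have h2 := quadraticChar_sq_one hc
  linear_combination (-(quadraticChar F y * quadraticChar F (1 - y))) * h2

private lemma card_chi_pair (hchar : ringChar F ≠ 2) (hq : 23 < Fintype.card F)
    {c : F} (hc : c ≠ 0) {ε : ℤ} (hε : ε = 1 ∨ ε = -1) :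
    4 ≤ (univ.filter fun x : F => quadraticChar F x = ε ∧ quadraticChar F (c - x) = ε).card := by
  classical
  have hε2 : ε * ε = 1 := by rcases hε with rfl | rfl <;> norm_num
  have hexp : ∀ x : F, (1 + ε * quadraticChar F x) * (1 + ε * quadraticChar F (c - x))
      = 1 + ε * quadraticChar F x + ε * quadraticChar F (c - x)
        + (ε * ε) * (quadraticChar F x * quadraticChar F (c - x)) := fun x => by ring
  have hsum : ∑ x : F, (1 + ε * quadraticChar F x) * (1 + ε * quadraticChar F (c - x))
      = (Fintype.card F : ℤ) - quadraticChar F (-1) := by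
    rw [Finset.sum_congr rfl fun x _ => hexp x]
    rw [Finset.sum_add_distrib, Finset.sum_add_distrib, Finset.sum_add_distrib,
      ← Finset.mul_sum, ← Finset.mul_sum, ← Finset.mul_sum,
      quadraticChar_sum_zero hchar, sum_chi_shift hchar c, sum_chi_jacobi hchar hc, hε2]
    simp only [Finset.sum_const, Finset.card_univ, nsmul_eq_mul, mul_one, mul_zero, add_zero,
      one_mul]
    ring
  have hbd : ∀ x : F, (1 + ε * quadraticChar F x) * (1 + ε * quadraticChar F (c - x))
      ≤ (if (quadraticChar F x = ε ∧ quadraticChar F (c - x) = ε) then (4:ℤ) else 0)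
        + ((if quadraticChar F x = 0 then (2:ℤ) else 0)
        + (if quadraticChar F (c - x) = 0 then (2:ℤ) else 0)) := by
    intro x
    rcases hε with rfl | rfl <;>
      rcases chi_trichotomy x with h1 | h1 | h1 <;>
        rcases chi_trichotomy (c - x) with h2 | h2 | h2 <;>
          simp [h1, h2] <;> norm_num
  have e1 : ∑ x : F, (if (quadraticChar F x = ε ∧ quadraticChar F (c - x) = ε)
      then (4:ℤ) else 0)
      = 4 * (univ.filter fun x : F =>
          quadraticChar F x = ε ∧ quadraticChar F (c - x) = ε).card := by
    rw [← Finset.sum_filter, Finset.sum_const]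
    push_cast
    ring
  have e2 : ∑ x : F, (if quadraticChar F x = 0 then (2:ℤ) else 0) = 2 := by
    have hfe : (univ.filter fun x : F => quadraticChar F x = 0) = {0} := by
      ext u
      simp only [Finset.mem_filter, Finset.mem_univ, true_and, Finset.mem_singleton,
        quadraticChar_eq_zero_iff]
    rw [← Finset.sum_filter, hfe]
    simp
  have e3 : ∑ x : F, (if quadraticChar F (c - x) = 0 then (2:ℤ) else 0) = 2 := by
    have hfe : (univ.filter fun x : F => quadraticChar F (c - x) = 0) = {c} := by
      ext u
      simp only [Finset.mem_filter, Finset.mem_univ, true_and, Finset.mem_singleton,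
        quadraticChar_eq_zero_iff, sub_eq_zero]
      exact eq_comm
    rw [← Finset.sum_filter, hfe]
    simp
  have hle := Finset.sum_le_sum (fun x (_ : x ∈ (univ : Finset F)) => hbd x)
  rw [hsum, Finset.sum_add_distrib, Finset.sum_add_distrib, e1, e2, e3] at hle
  have hm1 : quadraticChar F (-1:F) = 1 ∨ quadraticChar F (-1:F) = -1 :=
    quadraticChar_dichotomy (neg_ne_zero.mpr one_ne_zero)
  have hcq : (23:ℤ) < (Fintype.card F : ℤ) := by exact_mod_cast hq
  rcases hm1 with h | h <;> rw [h] at hle <;> omega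

private lemma card_chi_class (hchar : ringChar F ≠ 2) (hq : 23 < Fintype.card F)
    {ε : ℤ} (hε : ε = 1 ∨ ε = -1) :
    3 ≤ (univ.filter fun x : F => quadraticChar F x = ε).card := by
  classical
  have hsum : ∑ x : F, (1 + ε * quadraticChar F x) = (Fintype.card F : ℤ) := by
    rw [Finset.sum_add_distrib, ← Finset.mul_sum, quadraticChar_sum_zero hchar]
    simp [Finset.card_univ]
  have hbd : ∀ x : F, (1 + ε * quadraticChar F x)
      ≤ (if quadraticChar F x = ε then (2:ℤ) else 0)
        + (if quadraticChar F x = 0 then (1:ℤ) else 0) := by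
    intro x
    rcases hε with rfl | rfl <;> rcases chi_trichotomy x with h1 | h1 | h1 <;>
      simp [h1] <;> norm_num
  have e1 : ∑ x : F, (if quadraticChar F x = ε then (2:ℤ) else 0)
      = 2 * (univ.filter fun x : F => quadraticChar F x = ε).card := by
    rw [← Finset.sum_filter, Finset.sum_const]
    push_cast
    ring
  have e2 : ∑ x : F, (if quadraticChar F x = 0 then (1:ℤ) else 0) = 1 := by
    have hfe : (univ.filter fun x : F => quadraticChar F x = 0) = {0} := by
      ext u
      simp only [Finset.mem_filter, Finset.mem_univ, true_and, Finset.mem_singleton,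
        quadraticChar_eq_zero_iff]
    rw [← Finset.sum_filter, hfe]
    simp
  have hle := Finset.sum_le_sum (fun x (_ : x ∈ (univ : Finset F)) => hbd x)
  rw [hsum, Finset.sum_add_distrib, e1, e2] at hle
  have hcq : (23:ℤ) < (Fintype.card F : ℤ) := by exact_mod_cast hq
  omega

private lemma L1 {a b : F} (hab : a ≠ b) {s₁ s₂ w : F}
    (h1 : s₁ ≠ 0) (h12 : s₁ ≠ s₂) (hw0 : w ≠ 0) (hw1 : w ≠ -s₁) (hw2 : w ≠ -(s₁ + s₂))
    (heq : qf a b (s₁ + w) - qf a b s₁ = qf a b (s₂ + w) - qf a b s₂) :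
    IsSquare (s₁ + w) ↔ IsSquare s₁ := by
  have hba : b - a ≠ 0 := sub_ne_zero.mpr (Ne.symm hab)
  have hab' : a - b ≠ 0 := sub_ne_zero.mpr hab
  have hs1w : s₁ + w ≠ 0 := fun h => hw1 (by linear_combination h)
  by_contra hmix
  -- classify the right-hand side value
  have hRHS : (qf a b (s₂ + w) - qf a b s₂ = a * w)
      ∨ (qf a b (s₂ + w) - qf a b s₂ = b * w)
      ∨ (s₁ ≠ s₂ ∧ IsSquare s₂ ∧ ¬ IsSquare (s₂ + w)
          ∧ qf a b (s₂ + w) - qf a b s₂ = b * (s₂ + w) - a * s₂)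
      ∨ (s₁ ≠ s₂ ∧ ¬ IsSquare s₂ ∧ IsSquare (s₂ + w)
          ∧ qf a b (s₂ + w) - qf a b s₂ = a * (s₂ + w) - b * s₂) := by
    by_cases hs2 : s₂ = 0
    · subst hs2
      rw [zero_add, qf_zero, sub_zero]
      by_cases hsq : IsSquare w
      · exact Or.inl (qf_inR a b ⟨hw0, hsq⟩)
      · exact Or.inr (Or.inl (qf_inN a b ⟨hw0, hsq⟩))
    · by_cases hs2w : s₂ + w = 0
      · have hs2e : s₂ = -w := by linear_combination hs2w
        rw [hs2w, qf_zero, zero_sub]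
        by_cases hsq : IsSquare s₂
        · refine Or.inl ?_
          rw [qf_inR a b ⟨hs2, hsq⟩, hs2e]; ring
        · refine Or.inr (Or.inl ?_)
          rw [qf_inN a b ⟨hs2, hsq⟩, hs2e]; ring
      · by_cases hsq : IsSquare s₂ <;> by_cases hsqw : IsSquare (s₂ + w)
        · refine Or.inl ?_
          rw [qf_inR a b ⟨hs2, hsq⟩, qf_inR a b ⟨hs2w, hsqw⟩]; ring
        · exact Or.inr (Or.inr (Or.inl ⟨h12, hsq, hsqw,
            by rw [qf_inR a b ⟨hs2, hsq⟩, qf_inN a b ⟨hs2w, hsqw⟩]⟩))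
        · exact Or.inr (Or.inr (Or.inr ⟨h12, hsq, hsqw,
            by rw [qf_inN a b ⟨hs2, hsq⟩, qf_inR a b ⟨hs2w, hsqw⟩]⟩))
        · refine Or.inr (Or.inl ?_)
          rw [qf_inN a b ⟨hs2, hsq⟩, qf_inN a b ⟨hs2w, hsqw⟩]; ring
  by_cases hR1 : IsSquare s₁
  · -- s₁ ∈ R, s₁ + w ∈ N
    have hN1w : ¬ IsSquare (s₁ + w) := fun h => hmix ⟨fun _ => hR1, fun _ => h⟩
    rw [qf_inN a b ⟨hs1w, hN1w⟩, qf_inR a b ⟨h1, hR1⟩] at heq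
    rcases hRHS with h | h | ⟨_, _, _, h⟩ | ⟨_, _, _, h⟩
    · have hz : (b - a) * (s₁ + w) = 0 := by linear_combination heq + h
      exact hs1w ((mul_eq_zero.mp hz).resolve_left hba)
    · have hz : (b - a) * s₁ = 0 := by linear_combination heq + h
      exact h1 ((mul_eq_zero.mp hz).resolve_left hba)
    · have hz : (b - a) * (s₁ - s₂) = 0 := by linear_combination heq + h
      exact h12 (sub_eq_zero.mp ((mul_eq_zero.mp hz).resolve_left hba))
    · have hz : (b - a) * (s₁ + s₂ + w) = 0 := by linear_combination heq + h
      exact hw2 (by linear_combination (mul_eq_zero.mp hz).resolve_left hba)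
  · -- s₁ ∈ N, s₁ + w ∈ R
    have hR1w : IsSquare (s₁ + w) := by
      by_contra hA
      exact hmix (iff_of_false hA hR1)
    rw [qf_inR a b ⟨hs1w, hR1w⟩, qf_inN a b ⟨h1, hR1⟩] at heq
    rcases hRHS with h | h | ⟨_, _, _, h⟩ | ⟨_, _, _, h⟩
    · have hz : (a - b) * s₁ = 0 := by linear_combination heq + h
      exact h1 ((mul_eq_zero.mp hz).resolve_left hab')
    · have hz : (a - b) * (s₁ + w) = 0 := by linear_combination heq + h
      exact hs1w ((mul_eq_zero.mp hz).resolve_left hab')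
    · have hz : (a - b) * (s₁ + s₂ + w) = 0 := by linear_combination heq + h
      exact hw2 (by linear_combination (mul_eq_zero.mp hz).resolve_left hab')
    · have hz : (a - b) * (s₁ - s₂) = 0 := by linear_combination heq + h
      exact h12 (sub_eq_zero.mp ((mul_eq_zero.mp hz).resolve_left hab'))

private lemma stage1 (hchar : ringChar F ≠ 2) (hq : 23 < Fintype.card F)
    {a b : F} (hab : a ≠ b) {s₁ s₂ : F} (h1 : s₁ ≠ 0) (h12 : s₁ ≠ s₂)
    (hV : ∀ w : F, qf a b (s₁ + w) - qf a b s₁ = qf a b (s₂ + w) - qf a b s₂) : False := by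
  classical
  have hcc : ∀ u : F, u ≠ 0 → u ≠ s₁ → u ≠ -s₂ → (IsSquare u ↔ IsSquare s₁) := by
    intro u hu0 hus hus2
    have hw : s₁ + (u - s₁) = u := by ring
    have hL := L1 hab h1 h12 (w := u - s₁)
      (fun h => hus (by linear_combination h))
      (fun h => hu0 (by linear_combination h))
      (fun h => hus2 (by linear_combination h))
      (hV (u - s₁))
    rwa [hw] at hL
  have hd := quadraticChar_dichotomy h1
  have hε : -quadraticChar F s₁ = 1 ∨ -quadraticChar F s₁ = -1 := by
    rcases hd with h | h <;> rw [h] <;> norm_num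
  have hne : (-quadraticChar F s₁ : ℤ) ≠ 0 := by
    rcases hd with h | h <;> rw [h] <;> norm_num
  have hsubset : (univ.filter fun x : F => quadraticChar F x = -quadraticChar F s₁)
      ⊆ {s₁, -s₂} := by
    intro u hu
    rw [Finset.mem_filter] at hu
    have hu0 : u ≠ 0 := ne_zero_of_chi hne hu.2
    by_contra hnot
    rw [Finset.mem_insert, Finset.mem_singleton] at hnot
    push_neg at hnot
    have hiff := hcc u hu0 hnot.1 hnot.2
    have hchieq : quadraticChar F u = quadraticChar F s₁ := by
      rcases quadraticChar_dichotomy hu0 with h | h <;> rcases hd with h' | h'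
      · rw [h, h']
      · exfalso
        have := (quadraticChar_one_iff_isSquare hu0).mp h
        have := (quadraticChar_one_iff_isSquare h1).mpr (hiff.mp this)
        rw [this] at h'; norm_num at h'
      · exfalso
        have hnu := quadraticChar_neg_one_iff_not_isSquare.mp h
        have hs := (quadraticChar_one_iff_isSquare h1).mp h'
        exact hnu (hiff.mpr hs)
      · rw [h, h']
    rw [hchieq] at hu
    have := hu.2
    omega
  have hcard := card_chi_class hchar hq hε
  have hle := Finset.card_le_card hsubset
  have h2 : ({s₁, -s₂} : Finset F).card ≤ 2 :=
    le_trans (Finset.card_insert_le _ _) (by simp)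
  omega

private lemma stage2 (hchar : ringChar F ≠ 2) (hq : 23 < Fintype.card F)
    {a b : F} (hab : a ≠ b) (ψ : F ≃+ F) {s₀ : F} (hs₀ : s₀ ≠ 0)
    (hE : ∀ t : F, qf a b (s₀ + ψ t) = qf a b s₀ + ψ (qf a b t)) : False := by
  classical
  have h2 : (2 : F) ≠ 0 := Ring.two_ne_zero hchar
  have hab' : a - b ≠ 0 := sub_ne_zero.mpr hab
  have h2s : 2 * s₀ ≠ 0 := mul_ne_zero h2 hs₀
  have hSym : ∀ t : F, qf a b (s₀ + ψ t) + qf a b (s₀ - ψ t)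
      = 2 * qf a b s₀ + ψ (qf a b t + qf a b (-t)) := by
    intro t
    have e1 := hE t
    have e2 := hE (-t)
    rw [map_neg] at e2
    rw [map_add, show s₀ - ψ t = s₀ + -ψ t from sub_eq_add_neg _ _]
    linear_combination e1 + e2
  have hRRcard := card_chi_pair hchar hq (c := 2 * s₀) h2s (Or.inl rfl)
  have hkey : ∀ x : F, inR x → inR (2*s₀ - x) →
      ψ (qf a b (ψ.symm (x - s₀)) + qf a b (-(ψ.symm (x - s₀))))
      = 2*a*s₀ - 2 * qf a b s₀ := by
    intro x hx1 hx2
    have h := hSym (ψ.symm (x - s₀))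
    rw [ψ.apply_symm_apply] at h
    rw [show s₀ + (x - s₀) = x from by ring, show s₀ - (x - s₀) = 2*s₀ - x from by ring] at h
    rw [qf_inR a b hx1, qf_inR a b hx2] at h
    linear_combination -h
  have hmemA : ∀ x : F, x ∈ (univ.filter fun x : F =>
      quadraticChar F x = 1 ∧ quadraticChar F (2*s₀ - x) = 1) →
      inR x ∧ inR (2*s₀ - x) := by
    intro x hx
    rw [Finset.mem_filter] at hx
    exact ⟨inR_of_chi hx.2.1, inR_of_chi hx.2.2⟩
  by_cases hm1 : IsSquare (-1 : F)
  · -- -1 is a square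
    have hzero : ∀ t : F, qf a b t + qf a b (-t) = 0 := by
      intro t
      by_cases ht : t = 0
      · subst ht; rw [neg_zero, qf_zero]; ring
      · have hnt : (-t : F) ≠ 0 := neg_ne_zero.mpr ht
        by_cases hsq : IsSquare t
        · have hns : IsSquare (-t) := by
            rw [show -t = -1 * t from by ring]; exact hm1.mul hsq
          rw [qf_inR a b ⟨ht, hsq⟩, qf_inR a b ⟨hnt, hns⟩]; ring
        · have hns : ¬ IsSquare (-t) := fun h => hsq (by
            rw [show t = -1 * -t from by ring]; exact hm1.mul h)
          rw [qf_inN a b ⟨ht, hsq⟩, qf_inN a b ⟨hnt, hns⟩]; ring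
    obtain ⟨x, hxA⟩ : (univ.filter fun x : F =>
        quadraticChar F x = 1 ∧ quadraticChar F (2*s₀ - x) = 1).Nonempty :=
      Finset.card_pos.mp (by omega)
    obtain ⟨hx1, hx2⟩ := hmemA x hxA
    have hk := hkey x hx1 hx2
    rw [hzero, map_zero] at hk
    -- NN leg
    have hNNcard := card_chi_pair hchar hq (c := 2 * s₀) h2s (Or.inr rfl)
    obtain ⟨y, hyA⟩ : (univ.filter fun x : F =>
        quadraticChar F x = -1 ∧ quadraticChar F (2*s₀ - x) = -1).Nonempty :=
      Finset.card_pos.mp (by omega)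
    rw [Finset.mem_filter] at hyA
    have hy1 := inN_of_chi hyA.2.1
    have hy2 := inN_of_chi hyA.2.2
    have h' := hSym (ψ.symm (y - s₀))
    rw [ψ.apply_symm_apply, show s₀ + (y - s₀) = y from by ring,
      show s₀ - (y - s₀) = 2*s₀ - y from by ring, qf_inN a b hy1, qf_inN a b hy2,
      hzero, map_zero] at h'
    have hz : 2 * ((a - b) * s₀) = 0 := by linear_combination -hk - h'
    rcases mul_eq_zero.mp hz with h | h
    · exact h2 h
    · rcases mul_eq_zero.mp h with h | h
      · exact hab' h
      · exact hs₀ h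
  · -- -1 is not a square
    have hχm1 : quadraticChar F (-1 : F) = -1 :=
      quadraticChar_neg_one_iff_not_isSquare.mpr hm1
    have hflip : ∀ t : F, quadraticChar F (-t) = - quadraticChar F t := by
      intro t
      rw [show -t = -1 * t from by ring, map_mul, hχm1]
      ring
    have hval : ∀ t : F, t ≠ 0 →
        (qf a b t + qf a b (-t) = (a - b) * t ∨ qf a b t + qf a b (-t) = (b - a) * t) := by
      intro t ht
      have hnt : (-t : F) ≠ 0 := neg_ne_zero.mpr ht
      by_cases hsq : IsSquare t
      · left
        have hc1 : quadraticChar F t = 1 := (quadraticChar_one_iff_isSquare ht).mpr hsq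
        have hcn : quadraticChar F (-t) = -1 := by rw [hflip, hc1]
        rw [qf_inR a b ⟨ht, hsq⟩, qf_inN a b (inN_of_chi hcn)]; ring
      · right
        have hc1 : quadraticChar F t = -1 := quadraticChar_neg_one_iff_not_isSquare.mpr hsq
        have hcn : quadraticChar F (-t) = 1 := by rw [hflip, hc1]; ring
        rw [qf_inN a b ⟨ht, hsq⟩, qf_inR a b (inR_of_chi hcn)]; ring
    -- choose two essentially different elements of the RR set
    set A := (univ.filter fun x : F =>
      quadraticChar F x = 1 ∧ quadraticChar F (2*s₀ - x) = 1) with hAdef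
    have hc1 : 3 ≤ (A.erase s₀).card := by
      have := Finset.pred_card_le_card_erase (s := A) (a := s₀)
      omega
    obtain ⟨x, hx⟩ : (A.erase s₀).Nonempty := Finset.card_pos.mp (by omega)
    have hxA : x ∈ A := Finset.mem_of_mem_erase hx
    have hxs : x ≠ s₀ := Finset.ne_of_mem_erase hx
    have hc2 : 1 ≤ (((A.erase s₀).erase x).erase (2*s₀ - x)).card := by
      have e1 := Finset.pred_card_le_card_erase (s := (A.erase s₀).erase x) (a := 2*s₀ - x)
      have e2 := Finset.pred_card_le_card_erase (s := A.erase s₀) (a := x)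
      omega
    obtain ⟨x', hx'⟩ : (((A.erase s₀).erase x).erase (2*s₀ - x)).Nonempty :=
      Finset.card_pos.mp (by omega)
    have hx'1 : x' ≠ 2*s₀ - x := Finset.ne_of_mem_erase hx'
    have hx'2 : x' ≠ x := Finset.ne_of_mem_erase (Finset.mem_of_mem_erase hx')
    have hx's : x' ≠ s₀ :=
      Finset.ne_of_mem_erase (Finset.mem_of_mem_erase (Finset.mem_of_mem_erase hx'))
    have hx'A : x' ∈ A :=
      Finset.mem_of_mem_erase (Finset.mem_of_mem_erase (Finset.mem_of_mem_erase hx'))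
    obtain ⟨hxR, hxR2⟩ := hmemA x (by rwa [hAdef] at hxA)
    obtain ⟨hx'R, hx'R2⟩ := hmemA x' (by rwa [hAdef] at hx'A)
    have hu0 : ψ.symm (x - s₀) ≠ 0 := by
      intro h
      apply hxs
      have h' := congrArg ψ h
      rw [ψ.apply_symm_apply, map_zero] at h'
      linear_combination h'
    have hu'0 : ψ.symm (x' - s₀) ≠ 0 := by
      intro h
      apply hx's
      have h' := congrArg ψ h
      rw [ψ.apply_symm_apply, map_zero] at h'
      linear_combination h'
    have hk1 := hkey x hxR hxR2
    have hk2 := hkey x' hx'R hx'R2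
    have heq : qf a b (ψ.symm (x - s₀)) + qf a b (-(ψ.symm (x - s₀)))
        = qf a b (ψ.symm (x' - s₀)) + qf a b (-(ψ.symm (x' - s₀))) :=
      ψ.injective (by rw [hk1, hk2])
    have hor : ψ.symm (x' - s₀) = ψ.symm (x - s₀) ∨ ψ.symm (x' - s₀) = -ψ.symm (x - s₀) := by
      rcases hval _ hu0 with h | h <;> rcases hval _ hu'0 with h' | h' <;>
        rw [h, h'] at heq
      · exact Or.inl (mul_left_cancel₀ hab' heq).symm
      · refine Or.inr ?_
        have hz : (a - b) * (ψ.symm (x - s₀) + ψ.symm (x' - s₀)) = 0 := by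
          linear_combination heq
        have := (mul_eq_zero.mp hz).resolve_left hab'
        linear_combination this
      · refine Or.inr ?_
        have hz : (a - b) * (ψ.symm (x - s₀) + ψ.symm (x' - s₀)) = 0 := by
          linear_combination -heq
        have := (mul_eq_zero.mp hz).resolve_left hab'
        linear_combination this
      · refine Or.inl ?_
        have hz : (a - b) * (ψ.symm (x - s₀) - ψ.symm (x' - s₀)) = 0 := by
          linear_combination -heq
        have := (mul_eq_zero.mp hz).resolve_left hab'
        linear_combination -this
    rcases hor with h | h
    · apply hx'2
      have h' := congrArg ψ h
      rw [ψ.apply_symm_apply, ψ.apply_symm_apply] at h'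
      linear_combination h'
    · apply hx'1
      have h' := congrArg ψ h
      rw [ψ.apply_symm_apply, map_neg, ψ.apply_symm_apply] at h'
      linear_combination h'

private lemma qmul_eq_qf (a b x y : F) : qmul a b x y = x + qf a b (y - x) := by
  unfold qmul qf
  split_ifs <;> rfl

/-- Lemma 3.1: if `q > 23` and `(α,β,γ)` is an autotopism of `Q_{a,b}` (with `a ≠ b`)
whose components are all affine permutations, then `α = β = γ`. -/
theorem affine_autotopism_is_automorphism
    (hodd : Odd (Fintype.card F)) (hq : 23 < Fintype.card F)
    (a b : F) (hv : ValidPair a b) (hab : a ≠ b)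
    (α β γ : Equiv.Perm F) (hatp : IsAutotopism a b α β γ)
    (hα : IsAffinePerm α) (hβ : IsAffinePerm β) (hγ : IsAffinePerm γ) :
    α = β ∧ β = γ := by
  classical
  obtain ⟨ψ₁, c₁, hα1⟩ := hα
  obtain ⟨ψ₂, c₂, hβ1⟩ := hβ
  obtain ⟨ψ₃, c₃, hγ1⟩ := hγ
  have hchar : ringChar F ≠ 2 := by
    intro h
    have h1 := FiniteField.even_card_of_char_two h
    have h2 := Nat.odd_iff.mp hodd
    omega
  have key : ∀ x t : F, qf a b (ψ₂ x - ψ₁ x + (c₂ - c₁) + ψ₂ t)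
      = ψ₃ x - ψ₁ x + ψ₃ (qf a b t) + (c₃ - c₁) := by
    intro x t
    have h := hatp x (x + t)
    rw [qmul_eq_qf, qmul_eq_qf] at h
    rw [show x + t - x = t from by ring] at h
    rw [hα1 x, hβ1 (x + t), hγ1 (x + qf a b t)] at h
    rw [map_add ψ₂ x t] at h
    have harg : ψ₂ x + ψ₂ t + c₂ - (ψ₁ x + c₁)
        = ψ₂ x - ψ₁ x + (c₂ - c₁) + ψ₂ t := by ring
    rw [harg] at h
    rw [map_add ψ₃] at h
    linear_combination h
  have k0 : ∀ x : F, qf a b (ψ₂ x - ψ₁ x + (c₂ - c₁)) = ψ₃ x - ψ₁ x + (c₃ - c₁) := by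
    intro x
    have h := key x 0
    rw [map_zero ψ₂, add_zero, qf_zero, map_zero ψ₃, add_zero] at h
    exact h
  have hψ12 : ∀ x : F, ψ₂ x = ψ₁ x := by
    by_contra hne
    push_neg at hne
    obtain ⟨x₀, hx₀⟩ := hne
    have hzleg : ψ₂ (0:F) - ψ₁ 0 + (c₂ - c₁) = c₂ - c₁ := by simp
    have hW : ∀ w : F,
        qf a b (ψ₂ x₀ - ψ₁ x₀ + (c₂ - c₁) + w) - qf a b (ψ₂ x₀ - ψ₁ x₀ + (c₂ - c₁))
        = qf a b (c₂ - c₁ + w) - qf a b (c₂ - c₁) := by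
      intro w
      have h1 := key x₀ (ψ₂.symm w)
      have h2 := key 0 (ψ₂.symm w)
      rw [ψ₂.apply_symm_apply] at h1 h2
      rw [hzleg] at h2
      have g1 := k0 x₀
      have g2 := k0 0
      rw [hzleg] at g2
      linear_combination h1 - g1 - h2 + g2
    have hh0 : ψ₂ x₀ - ψ₁ x₀ ≠ 0 := sub_ne_zero.mpr hx₀
    by_cases hA0 : ψ₂ x₀ - ψ₁ x₀ + (c₂ - c₁) = 0
    · have hs1 : c₂ - c₁ ≠ 0 := fun h => hh0 (by rw [h, add_zero] at hA0; exact hA0)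
      exact stage1 hchar hq hab (s₁ := c₂ - c₁) (s₂ := ψ₂ x₀ - ψ₁ x₀ + (c₂ - c₁)) hs1
        (fun h => hh0 (by linear_combination -h)) (fun w => (hW w).symm)
    · exact stage1 hchar hq hab (s₁ := ψ₂ x₀ - ψ₁ x₀ + (c₂ - c₁)) (s₂ := c₂ - c₁) hA0
        (fun h => hh0 (by linear_combination h)) hW
  have hψ13 : ∀ x : F, ψ₃ x = ψ₁ x := by
    intro x
    have e1 : ψ₂ x - ψ₁ x = 0 := by rw [hψ12 x]; ring
    have h1 := key x 0
    rw [e1] at h1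
    have h2 := key 0 0
    rw [show ψ₂ (0:F) - ψ₁ 0 = 0 from by simp] at h2
    have h3 : ψ₃ x - ψ₁ x = ψ₃ 0 - ψ₁ 0 := by linear_combination h2 - h1
    rw [map_zero, map_zero, sub_zero] at h3
    linear_combination h3
  have hψ32 : ∀ u : F, ψ₃ u = ψ₂ u := fun u => (hψ13 u).trans (hψ12 u).symm
  have hzleg : ψ₂ (0:F) - ψ₁ 0 + (c₂ - c₁) = c₂ - c₁ := by simp
  have hc31 : c₃ - c₁ = qf a b (c₂ - c₁) := by
    have h2 := k0 0
    rw [hzleg, map_zero, map_zero] at h2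
    linear_combination -h2
  have hE2 : ∀ t : F, qf a b (c₂ - c₁ + ψ₂ t) = qf a b (c₂ - c₁) + ψ₂ (qf a b t) := by
    intro t
    have h := key 0 t
    rw [hzleg, map_zero, map_zero, hψ32 (qf a b t)] at h
    linear_combination h + hc31
  have hs0 : c₂ - c₁ = 0 := by
    by_contra hs
    exact stage2 hchar hq hab ψ₂ hs hE2
  have hc21 : c₂ = c₁ := by linear_combination hs0
  have hc3 : c₃ = c₁ := by
    have h := hc31
    rw [hs0, qf_zero] at h
    linear_combination h
  constructor
  · ext x
    rw [hα1 x, hβ1 x, hψ12 x, hc21]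
  · ext x
    rw [hβ1 x, hγ1 x, hψ32 x, hc3, hc21]
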